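/- Let A_1, A_2, … be a quasifibonacci sequence of level N, let k ≥ N+1, and let n satisfy A_{k,2} < n < A_{k+1}. Then every a ∈ S_n has l(a) = k (in particular a_k = 1), and the map a ↦ a − τ_k (setting the k-th entry to 0) is a bijection from S_n onto S_{n−A_k} such that (a,b) is an edge in G_n if and only if (a−τ_k, b−τ_k) is an edge in G_{n−A_k}; i.e., P_n is isomorphic to P_{n−A_k} and P_n = P_{n−A_k} + τ_k. -/

import Mathlib

/-- `A` (with meaningful values at indices `≥ 1`) is a quasifibonacci sequence of level `N`:
the terms are positive, `A (k+N) = A (k+N-1) + ⋯ + A k` for all `k ≥ 1`, and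
`A k > A (k-1) + ⋯ + A 1` for all `1 ≤ k ≤ N`. -/
def QuasiFib (N : ℕ) (A : ℕ → ℕ) : Prop :=
  (∀ i, 1 ≤ i → 0 < A i) ∧
  (∀ k, 1 ≤ k → A (k + N) = ∑ i ∈ Finset.Icc k (k + N - 1), A i) ∧
  (∀ k, 1 ≤ k → k ≤ N → (∑ i ∈ Finset.Icc 1 (k - 1), A i) < A k)

/-- `SRep A n` is the set of partitions of `n` into distinct terms of `A`, encoded as the
finite sets `F` of positive indices with `∑_{i ∈ F} A i = n` (i.e. the 0-1 indicator
sequences of the paper). -/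
def SRep (A : ℕ → ℕ) (n : ℕ) : Set (Finset ℕ) :=
  {F | (∀ i ∈ F, 1 ≤ i) ∧ (∑ i ∈ F, A i) = n}

/-- the length `l(a)`: the largest index `i` with `a_i = 1` (and `0` for the empty set). -/
def len (F : Finset ℕ) : ℕ := F.sup id

/-- The directed edge relation of the digraph `G_n`: `(a,b)` is an edge iff there is a `k ≥ 1`
with `a_{k+N} = 1`, `a_k = ⋯ = a_{k+N-1} = 0`, `b_{k+N} = 0`, `b_k = ⋯ = b_{k+N-1} = 1`, and
`a_t = b_t` for all `t ∉ {k, …, k+N}`. -/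
def Edge (N : ℕ) (F G : Finset ℕ) : Prop :=
  ∃ k, 1 ≤ k ∧ (k + N) ∈ F ∧ (∀ i ∈ Finset.Ico k (k + N), i ∉ F) ∧
    (k + N) ∉ G ∧ (∀ i ∈ Finset.Ico k (k + N), i ∈ G) ∧
    (∀ t, t ∉ Finset.Icc k (k + N) → (t ∈ F ↔ t ∈ G))

/-- The partial order of the poset `P_n`: `a ≥ b` iff `b` is reachable from `a` by a
(possibly empty) directed path of edges. -/
def pge (N : ℕ) : Finset ℕ → Finset ℕ → Prop := Relation.ReflTransGen (Edge N)

/-- `A_{k,0} = A_k + Σ_{1 ≤ i < k-N-1, N∤i} A_{k-N-1-i}`. -/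
def Ak0 (N : ℕ) (A : ℕ → ℕ) (k : ℕ) : ℕ :=
  A k + ∑ i ∈ (Finset.Ico 1 (k - N - 1)).filter (fun i => ¬ N ∣ i), A (k - N - 1 - i)

/-- `A_{k,1} = A_k + Σ_{1 ≤ i < k-N, N∤i} A_{k-N-i}`. -/
def Ak1 (N : ℕ) (A : ℕ → ℕ) (k : ℕ) : ℕ :=
  A k + ∑ i ∈ (Finset.Ico 1 (k - N)).filter (fun i => ¬ N ∣ i), A (k - N - i)

/-- `A_{k,2} = A_k + Σ_{1 ≤ i < k-N+1, N∤i} A_{k-N+1-i}`. -/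
def Ak2 (N : ℕ) (A : ℕ → ℕ) (k : ℕ) : ℕ :=
  A k + ∑ i ∈ (Finset.Ico 1 (k - N + 1)).filter (fun i => ¬ N ∣ i), A (k - N + 1 - i)

section
variable (N : ℕ) (A : ℕ → ℕ)

lemma qf_rec (hN : 2 ≤ N) (hA : QuasiFib N A) {k : ℕ} (hk : N + 1 ≤ k) :
    A k = ∑ i ∈ Finset.Icc (k - N) (k - 1), A i := by
  have h := hA.2.1 (k - N) (by omega)
  have e1 : k - N + N = k := by omega
  rw [e1] at h
  exact h

lemma qf_mono (hN : 2 ≤ N) (hA : QuasiFib N A) :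
    ∀ i j, 1 ≤ i → i ≤ j → A i ≤ A j := by
  have step : ∀ i, 1 ≤ i → A i ≤ A (i + 1) := by
    intro i hi
    by_cases h : i + 1 ≤ N
    · have := hA.2.2 (i + 1) (by omega) h
      calc A i ≤ ∑ j ∈ Finset.Icc 1 (i + 1 - 1), A j := by
            apply Finset.single_le_sum (fun j _ => Nat.zero_le _)
            simp; omega
        _ ≤ A (i + 1) := this.le
    · have hrec := qf_rec N A hN hA (k := i + 1) (by omega)
      rw [hrec]
      apply Finset.single_le_sum (fun j _ => Nat.zero_le _)
      simp; omega
  intro i j hi hij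
  induction j with
  | zero => omega
  | succ m ih =>
    rcases Nat.lt_or_ge i (m + 1) with h | h
    · exact le_trans (ih (by omega)) (step m (by omega))
    · have : i = m + 1 := by omega
      simp [this]
end

section
variable (N : ℕ) (A : ℕ → ℕ)

/-- `D t = ∑_{s=1}^{t/N} A (t+1-N s)`. -/
def Dsum (t : ℕ) : ℕ := ∑ s ∈ Finset.Icc 1 (t / N), A (t + 1 - N * s)

lemma qf_D (hN : 2 ≤ N) (hA : QuasiFib N A) : ∀ t, Dsum N A t ≤ A t := by
  intro t
  induction t using Nat.strong_induction_on with
  | _ t ih =>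
    by_cases h0 : t < N
    · have : t / N = 0 := Nat.div_eq_of_lt h0
      simp [Dsum, this]
    · push_neg at h0
      have hq : 1 ≤ t / N := Nat.one_le_div_iff (by omega) |>.2 h0
      have hsplit : Dsum N A t = A (t + 1 - N) + Dsum N A (t - N) := by
        unfold Dsum
        rw [← Finset.sum_Ioc_add_eq_sum_Icc hq]
        have e1 : t + 1 - N * 1 = t + 1 - N := by ring_nf
        rw [e1, Nat.add_comm]
        congr 1
        apply Finset.sum_nbij' (i := fun s => s - 1) (j := fun s => s + 1)
        · intro a ha
          simp only [Finset.mem_Ioc] at ha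
          simp only [Finset.mem_Icc]
          constructor
          · omega
          · have : (t - N) / N = t / N - 1 := by
              have := Nat.sub_mul_div t N 1
              simpa using this
            omega
        · intro a ha
          simp only [Finset.mem_Icc] at ha
          simp only [Finset.mem_Ioc]
          have : (t - N) / N = t / N - 1 := by
            have := Nat.sub_mul_div t N 1
            simpa using this
          omega
        · intro a ha; simp only [Finset.mem_Ioc] at ha; omega
        · intro a ha; omega
        · intro a ha
          simp only [Finset.mem_Ioc] at ha
          congr 1
          have hNa : N * a ≤ t := by
            calc N * a ≤ N * (t / N) := Nat.mul_le_mul_left N ha.2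
              _ ≤ t := by rw [Nat.mul_comm]; exact Nat.div_mul_le_self t N
          have hma : N * (a - 1) = N * a - N := by
            cases a with
            | zero => omega
            | succ m => simp [Nat.mul_succ]
          have hge : N * 1 ≤ N * a := Nat.mul_le_mul_left N (by omega)
          omega
      calc Dsum N A t = A (t + 1 - N) + Dsum N A (t - N) := hsplit
        _ ≤ A t := by
          rcases Nat.eq_or_lt_of_le h0 with heq | hlt
          · -- t = N
            have hD : Dsum N A (t - N) = 0 := by
              have : (t - N) / N = 0 := by
                rw [← heq]; simp
              simp [Dsum, this]
            rw [hD]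
            have := qf_mono N A hN hA 1 t (by omega) (by omega)
            have e : t + 1 - N = 1 := by omega
            rw [e]; omega
          · -- t ≥ N + 1
            have hrec := qf_rec N A hN hA (k := t) (by omega)
            have h1 : A (t + 1 - N) ≤ A (t - 1) :=
              qf_mono N A hN hA _ _ (by omega) (by omega)
            have h2 : Dsum N A (t - N) ≤ A (t - N) := ih (t - N) (by omega)
            have hsub : ({t - N, t - 1} : Finset ℕ) ⊆ Finset.Icc (t - N) (t - 1) := by
              intro x hx; simp only [Finset.mem_insert, Finset.mem_singleton] at hx
              simp only [Finset.mem_Icc]; omega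
            have h3 := Finset.sum_le_sum_of_subset (f := A) hsub
            rw [Finset.sum_pair (by omega : t - N ≠ t - 1)] at h3
            omega
end

section
variable (N : ℕ) (A : ℕ → ℕ)

lemma qf_div_sum (hN : 2 ≤ N) (m : ℕ) (hm : 1 ≤ m) :
    ∑ i ∈ (Finset.Ico 1 m).filter (fun i => N ∣ i), A (m - i) = Dsum N A (m - 1) := by
  unfold Dsum
  symm
  apply Finset.sum_nbij' (i := fun s => N * s) (j := fun i => i / N)
  · intro s hs
    simp only [Finset.mem_Icc] at hs
    simp only [Finset.mem_filter, Finset.mem_Ico]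
    refine ⟨⟨?_, ?_⟩, Dvd.intro s rfl⟩
    · have : N * 1 ≤ N * s := Nat.mul_le_mul_left N hs.1
      omega
    · have : N * s ≤ m - 1 := by
        rw [Nat.mul_comm]; exact (Nat.le_div_iff_mul_le (by omega)).1 hs.2
      omega
  · intro i hi
    simp only [Finset.mem_filter, Finset.mem_Ico] at hi
    obtain ⟨⟨h1, h2⟩, s, rfl⟩ := hi
    simp only [Finset.mem_Icc]
    rw [Nat.mul_div_cancel_left s (by omega)]
    constructor
    · rcases Nat.eq_zero_or_pos s with rfl | h
      · simp at h1
      · exact h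
    · rw [Nat.le_div_iff_mul_le (by omega), Nat.mul_comm]
      omega
  · intro s hs
    exact Nat.mul_div_cancel_left s (by omega)
  · intro i hi
    simp only [Finset.mem_filter, Finset.mem_Ico] at hi
    exact Nat.mul_div_cancel' hi.2
  · intro s hs
    congr 1
    omega
end

section
variable (N : ℕ) (A : ℕ → ℕ)

lemma qf_ico_sum (m : ℕ) (hm : 1 ≤ m) :
    ∑ i ∈ Finset.Ico 1 m, A (m - i) = ∑ j ∈ Finset.Icc 1 (m - 1), A j := by
  apply Finset.sum_nbij' (i := fun i => m - i) (j := fun j => m - j)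
  · intro i hi; simp only [Finset.mem_Ico] at hi; simp only [Finset.mem_Icc]; omega
  · intro j hj; simp only [Finset.mem_Icc] at hj; simp only [Finset.mem_Ico]; omega
  · intro i hi; simp only [Finset.mem_Ico] at hi; omega
  · intro j hj; simp only [Finset.mem_Icc] at hj; omega
  · intro i hi; rfl

lemma qf_L3 (hN : 2 ≤ N) (hA : QuasiFib N A) {k : ℕ} (hk : N + 1 ≤ k) :
    ∑ j ∈ Finset.Icc 1 (k - 1), A j ≤ Ak2 N A k := by
  set m := k - N + 1 with hm
  have hm1 : 1 ≤ m := by omega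
  have hm2 : m - 1 = k - N := by omega
  -- split the full Ico sum into divisible and non-divisible parts
  have hsplit : (∑ i ∈ (Finset.Ico 1 m).filter (fun i => ¬ N ∣ i), A (m - i))
      + ∑ i ∈ (Finset.Ico 1 m).filter (fun i => N ∣ i), A (m - i)
      = ∑ i ∈ Finset.Ico 1 m, A (m - i) := by
    rw [Nat.add_comm]
    exact Finset.sum_filter_add_sum_filter_not (Finset.Ico 1 m) (fun i => N ∣ i) _
  have hdiv := qf_div_sum N A hN m hm1
  have hico := qf_ico_sum A m hm1
  have hD := qf_D N A hN hA (k - N)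
  -- A k = A (k-N) + ∑_{Ioc (k-N) (k-1)}
  have hAk : A k = A (k - N) + ∑ i ∈ Finset.Ioc (k - N) (k - 1), A i := by
    rw [qf_rec N A hN hA hk, Finset.Icc_eq_cons_Ioc (by omega), Finset.sum_cons]
  have hfull : ∑ j ∈ Finset.Icc 1 (k - 1), A j
      = (∑ j ∈ Finset.Icc 1 (k - N), A j) + ∑ i ∈ Finset.Ioc (k - N) (k - 1), A i := by
    rw [show Finset.Icc 1 (k-1) = Finset.Ioc 0 (k-1) from (Finset.Icc_add_one_left_eq_Ioc 0 (k-1)).symm,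
        show Finset.Icc 1 (k-N) = Finset.Ioc 0 (k-N) from (Finset.Icc_add_one_left_eq_Ioc 0 (k-N)).symm,
        ← Finset.sum_Ioc_consecutive A (by omega : 0 ≤ k - N) (by omega : k - N ≤ k - 1)]
  unfold Ak2
  rw [← hm, hm2] at *
  omega
end

/-- Proposition 4.3: for `k ≥ N+1` and `A_{k,2} < n < A_{k+1}`, every `a ∈ S_n` has
`l(a) = k` (in particular `a_k = 1`), and `a ↦ a - τ_k` (deleting position `k`) is a
bijection from `S_n` onto `S_{n-A_k}` preserving the edge relation in both directions;
i.e. `P_n ≅ P_{n-A_k}` and `P_n = P_{n-A_k} + τ_k`. -/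
theorem stmt_12 (N : ℕ) (hN : 2 ≤ N) (A : ℕ → ℕ) (hA : QuasiFib N A)
    (k n : ℕ) (hk : N + 1 ≤ k) (h1 : Ak2 N A k < n) (h2 : n < A (k + 1)) :
    (∀ F ∈ SRep A n, len F = k ∧ k ∈ F) ∧
    Set.BijOn (fun F => F.erase k) (SRep A n) (SRep A (n - A k)) ∧
    (∀ a ∈ SRep A n, ∀ b ∈ SRep A n,
      (Edge N a b ↔ Edge N (a.erase k) (b.erase k))) := by
  have mono := qf_mono N A hN hA
  have hAkAk2 : A k ≤ Ak2 N A k := Nat.le_add_right _ _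
  have hAkn : A k < n := lt_of_le_of_lt hAkAk2 h1
  -- n < 2 * A k
  have h2Ak : n < 2 * A k := by
    have hrec := qf_rec N A hN hA (k := k + 1) (by omega)
    have e1 : k + 1 - N = k - N + 1 := by omega
    have e2 : k + 1 - 1 = k := by omega
    rw [e1, e2] at hrec
    have hsub : Finset.Icc (k - N + 1) k ⊆ Finset.Icc (k - N) k := by
      apply Finset.Icc_subset_Icc_left; omega
    have hle : A (k + 1) ≤ ∑ i ∈ Finset.Icc (k - N) k, A i := by
      rw [hrec]; exact Finset.sum_le_sum_of_subset hsub
    have htop : ∑ i ∈ Finset.Icc (k - N) k, A i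
        = (∑ i ∈ Finset.Icc (k - N) (k - 1), A i) + A k := by
      have e3 : k = (k - 1) + 1 := by omega
      rw [e3, Finset.sum_Icc_succ_top (by omega)]
      congr 2 <;> omega
    have hAk := qf_rec N A hN hA (k := k) hk
    omega
  -- Part 1
  have part1 : ∀ F ∈ SRep A n, len F = k ∧ k ∈ F := by
    intro F hF
    obtain ⟨hpos, hsum⟩ := hF
    have hle : ∀ i ∈ F, i ≤ k := by
      intro i hi
      by_contra hgt
      push_neg at hgt
      have h3 : A (k + 1) ≤ A i := mono (k + 1) i (by omega) hgt
      have h4 : A i ≤ ∑ j ∈ F, A j :=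
        Finset.single_le_sum (fun j _ => Nat.zero_le _) hi
      omega
    have hkF : k ∈ F := by
      by_contra hk'
      have hsub : F ⊆ Finset.Icc 1 (k - 1) := by
        intro i hi
        simp only [Finset.mem_Icc]
        have := hpos i hi
        have := hle i hi
        constructor
        · omega
        · rcases Nat.eq_or_lt_of_le (hle i hi) with rfl | h
          · exact absurd hi hk'
          · omega
      have h5 : ∑ j ∈ F, A j ≤ ∑ j ∈ Finset.Icc 1 (k - 1), A j :=
        Finset.sum_le_sum_of_subset hsub
      have h6 := qf_L3 N A hN hA hk
      omega
    refine ⟨le_antisymm (Finset.sup_le fun i hi => hle i hi) ?_, hkF⟩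
    exact Finset.le_sup (f := id) hkF
  refine ⟨part1, ?_, ?_⟩
  · -- Part 2: bijection
    constructor
    · -- MapsTo
      intro F hF
      obtain ⟨hpos, hsum⟩ := hF
      have hkF : k ∈ F := (part1 F ⟨hpos, hsum⟩).2
      show F.erase k ∈ SRep A (n - A k)
      constructor
      · intro i hi; exact hpos i (Finset.mem_of_mem_erase hi)
      · have := Finset.add_sum_erase F A hkF
        omega
    constructor
    · -- InjOn
      intro a ha b hb hab
      have hab' : a.erase k = b.erase k := hab
      have hka : k ∈ a := (part1 a ha).2
      have hkb : k ∈ b := (part1 b hb).2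
      calc a = insert k (a.erase k) := (Finset.insert_erase hka).symm
        _ = insert k (b.erase k) := by rw [hab']
        _ = b := Finset.insert_erase hkb
    · -- SurjOn
      intro G hG
      obtain ⟨hpos, hsum⟩ := hG
      have hlt : ∀ m ∈ G, m < k := by
        intro m hm
        by_contra hge
        push_neg at hge
        have h3 : A k ≤ A m := mono k m (by omega) hge
        have h4 : A m ≤ ∑ j ∈ G, A j :=
          Finset.single_le_sum (fun j _ => Nat.zero_le _) hm
        omega
      have hkG : k ∉ G := fun h => absurd (hlt k h) (by omega)
      refine ⟨insert k G, ⟨?_, ?_⟩, ?_⟩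
      · intro i hi
        rcases Finset.mem_insert.1 hi with rfl | h
        · omega
        · exact hpos i h
      · rw [Finset.sum_insert hkG, hsum]; omega
      · show (insert k G).erase k = G
        exact Finset.erase_insert hkG
  · -- Part 3: edges
    intro a ha b hb
    have hka : k ∈ a := (part1 a ha).2
    have hkb : k ∈ b := (part1 b hb).2
    constructor
    · rintro ⟨j, hj1, hjF, hIcoF, hjG, hIcoG, hout⟩
      have hknot : k ∉ Finset.Icc j (j + N) := by
        simp only [Finset.mem_Icc]
        rintro ⟨h3, h4⟩
        rcases Nat.eq_or_lt_of_le h4 with heq | hlt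
        · exact hjG (heq ▸ hkb)
        · exact hIcoF k (Finset.mem_Ico.2 ⟨h3, hlt⟩) hka
      have hkne : k ≠ j + N := by
        intro h; apply hknot; simp only [Finset.mem_Icc]; omega
      refine ⟨j, hj1, Finset.mem_erase.2 ⟨Ne.symm hkne, hjF⟩, ?_, ?_, ?_, ?_⟩
      · intro i hi h; exact hIcoF i hi (Finset.mem_of_mem_erase h)
      · intro h; exact hjG (Finset.mem_of_mem_erase h)
      · intro i hi
        refine Finset.mem_erase.2 ⟨?_, hIcoG i hi⟩
        intro h; apply hknot
        simp only [Finset.mem_Ico] at hi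
        simp only [Finset.mem_Icc]; omega
      · intro t ht
        by_cases htk : t = k
        · subst htk
          simp only [Finset.mem_erase, ne_eq, not_true_eq_false, false_and]
        · simp only [Finset.mem_erase, ne_eq, htk, not_false_eq_true, true_and]
          exact hout t ht
    · rintro ⟨j, hj1, hjF, hIcoF, hjG, hIcoG, hout⟩
      have hknot : k ∉ Finset.Icc j (j + N) := by
        simp only [Finset.mem_Icc]
        rintro ⟨h3, h4⟩
        rcases Nat.eq_or_lt_of_le h4 with heq | hlt
        · rw [← heq] at hjF
          exact (Finset.notMem_erase k a) hjF
        · exact (Finset.notMem_erase k b)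
            (hIcoG k (Finset.mem_Ico.2 ⟨h3, hlt⟩))
      have hkne : k ≠ j + N := by
        intro h; apply hknot; simp only [Finset.mem_Icc]; omega
      refine ⟨j, hj1, Finset.mem_of_mem_erase hjF, ?_, ?_, ?_, ?_⟩
      · intro i hi h
        apply hIcoF i hi
        refine Finset.mem_erase.2 ⟨?_, h⟩
        intro he; apply hknot
        simp only [Finset.mem_Ico] at hi
        simp only [Finset.mem_Icc]; omega
      · intro h
        exact hjG (Finset.mem_erase.2 ⟨Ne.symm hkne, h⟩)
      · intro i hi
        exact Finset.mem_of_mem_erase (hIcoG i hi)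
      · intro t ht
        by_cases htk : t = k
        · subst htk; simp [hka, hkb]
        · have := hout t ht
          simp only [Finset.mem_erase, ne_eq, htk, not_false_eq_true, true_and] at this
          exact this
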